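/- arXiv:1001.1654 — 3 statements merged into one kernel-verified Lean document; each statement's English description precedes it below -/
import Mathlib

section
/- Suppose A = QR with Q ∈ ℝ^{N×N} orthogonal (QᵀQ = I) and R ∈ ℝ^{N×N} upper triangular invertible. Let dA, dQ, dR satisfy dA = dQ·R + Q·dR, (dQ)ᵀQ + Qᵀ dQ = 0, and dR upper triangular (P_L ∘ dR = 0). Then with X := Qᵀ dQ one has P_L ∘ X = P_L ∘ (Qᵀ · dA · R⁻¹), dR = Qᵀ dA − X R, and dQ = (dA − Q dR) R⁻¹. -/
open Matrix
open scoped Matrix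

/-- `P_L`: strictly lower triangular all-ones pattern. -/
def PL (N : ℕ) : Matrix (Fin N) (Fin N) ℝ := Matrix.of fun i j => if j < i then 1 else 0

lemma PL_hadamard_eq_zero_iff {N : ℕ} (M : Matrix (Fin N) (Fin N) ℝ) :
    (PL N) ⊙ M = 0 ↔ M.BlockTriangular id := by
  constructor
  · intro h i j hij
    have := congrFun (congrFun h i) j
    simp [PL, Matrix.hadamard] at this
    exact this hij
  · intro h
    ext i j
    by_cases hij : j < i
    · simpa [PL, Matrix.hadamard, hij] using h hij
    · simp [PL, Matrix.hadamard, hij]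

theorem qr_differential_formulas (N : ℕ)
    (A Q R dA dQ dR : Matrix (Fin N) (Fin N) ℝ)
    (hA : A = Q * R) (hQ : Qᵀ * Q = 1)
    (hR : (PL N) ⊙ R = 0) (hRinv : IsUnit R.det)
    (hdA : dA = dQ * R + Q * dR)
    (hdQ : dQᵀ * Q + Qᵀ * dQ = 0)
    (hdR : (PL N) ⊙ dR = 0) :
    (PL N) ⊙ (Qᵀ * dQ) = (PL N) ⊙ (Qᵀ * dA * R⁻¹) ∧
    dR = Qᵀ * dA - (Qᵀ * dQ) * R ∧
    dQ = (dA - Q * dR) * R⁻¹ := by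
  have hQdA : Qᵀ * dA = (Qᵀ * dQ) * R + dR := by
    rw [hdA, Matrix.mul_add, ← Matrix.mul_assoc, ← Matrix.mul_assoc, hQ, Matrix.one_mul]
  have hRRinv : R * R⁻¹ = 1 := Matrix.mul_nonsing_inv R hRinv
  have h2 : dR = Qᵀ * dA - (Qᵀ * dQ) * R := by rw [hQdA]; abel
  have h3 : dQ = (dA - Q * dR) * R⁻¹ := by
    have : dA - Q * dR = dQ * R := by rw [hdA]; abel
    rw [this, Matrix.mul_assoc, hRRinv, Matrix.mul_one]
  refine ⟨?_, h2, h3⟩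
  have hdRRinv : (PL N) ⊙ (dR * R⁻¹) = 0 := by
    rw [PL_hadamard_eq_zero_iff]
    have hRbt : R.BlockTriangular id := (PL_hadamard_eq_zero_iff R).mp hR
    have : Invertible R := R.invertibleOfIsUnitDet hRinv
    exact ((PL_hadamard_eq_zero_iff dR).mp hdR).mul
      (Matrix.blockTriangular_inv_of_blockTriangular hRbt)
  have : Qᵀ * dA * R⁻¹ = Qᵀ * dQ + dR * R⁻¹ := by
    rw [hQdA, Matrix.add_mul, Matrix.mul_assoc, hRRinv, Matrix.mul_one]
  rw [this, Matrix.hadamard_add, hdRRinv, add_zero]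
end

section
/- Let A = QR with Q orthogonal and R upper triangular invertible, and let dA, dQ, dR be as in the differentiated QR system (dA = dQ R + Q dR, dQᵀQ + QᵀdQ = 0, P_L ∘ dR = 0). Then for arbitrary matrices Q̄, R̄ ∈ ℝ^{N×N}, defining Ā := Q( R̄ + P_L ∘ (R R̄ᵀ − R̄ Rᵀ + Qᵀ Q̄ − Q̄ᵀ Q) · R⁻ᵀ ) + (Q̄ − Q Qᵀ Q̄) R⁻ᵀ, one has tr(Āᵀ dA) = tr(Q̄ᵀ dQ) + tr(R̄ᵀ dR). -/
open Matrix
open scoped Matrix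

lemma PL_hadamard_eq_zero {N : ℕ} {M : Matrix (Fin N) (Fin N) ℝ} :
    (PL N) ⊙ M = 0 ↔ ∀ i j : Fin N, j < i → M i j = 0 := by
  constructor
  · intro h i j hij
    have := congrFun (congrFun h i) j
    simpa [PL, Matrix.hadamard_apply, hij] using this
  · intro h
    ext i j
    by_cases hij : j < i
    · simp [PL, Matrix.hadamard_apply, hij, h i j hij]
    · simp [PL, Matrix.hadamard_apply, hij]

lemma had_trace {N : ℕ} (A B C : Matrix (Fin N) (Fin N) ℝ) :
    ((A ⊙ B)ᵀ * C).trace = (Bᵀ * (A ⊙ C)).trace := by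
  simp only [Matrix.trace, Matrix.diag, Matrix.mul_apply, Matrix.transpose_apply,
    Matrix.hadamard_apply]
  refine Finset.sum_congr rfl fun i _ => Finset.sum_congr rfl fun k _ => by ring

lemma trace_transpose_trick {N : ℕ} (B R L : Matrix (Fin N) (Fin N) ℝ) :
    (B * Rᵀ * L).trace = (R * Bᵀ * Lᵀ).trace := by
  calc (B * Rᵀ * L).trace = ((B * Rᵀ * L)ᵀ).trace := (Matrix.trace_transpose _).symm
    _ = (Lᵀ * (R * Bᵀ)).trace := by
        congr 1
        simp [Matrix.transpose_mul, Matrix.transpose_transpose]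
    _ = ((R * Bᵀ) * Lᵀ).trace := Matrix.trace_mul_comm _ _
    _ = (R * Bᵀ * Lᵀ).trace := rfl

lemma lemA {N : ℕ} (B R L : Matrix (Fin N) (Fin N) ℝ) :
    ((Bᵀ * (L - Lᵀ)) * R).trace + ((R * Bᵀ - B * Rᵀ)ᵀ * L).trace = 0 := by
  have h1 : ((Bᵀ * (L - Lᵀ)) * R).trace = (R * Bᵀ * L).trace - (R * Bᵀ * Lᵀ).trace := by
    rw [Matrix.mul_sub, Matrix.sub_mul, Matrix.trace_sub,
      Matrix.trace_mul_comm (Bᵀ * L) R, Matrix.trace_mul_comm (Bᵀ * Lᵀ) R,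
      ← Matrix.mul_assoc, ← Matrix.mul_assoc]
  have h2 : ((R * Bᵀ - B * Rᵀ)ᵀ * L).trace = (R * Bᵀ * Lᵀ).trace - (R * Bᵀ * L).trace := by
    rw [Matrix.transpose_sub, Matrix.sub_mul, Matrix.trace_sub]
    simp only [Matrix.transpose_mul, Matrix.transpose_transpose]
    rw [trace_transpose_trick B R L]
  rw [h1, h2]; ring

lemma lemB {N : ℕ} (C L : Matrix (Fin N) (Fin N) ℝ) :
    ((C - Cᵀ)ᵀ * L).trace = (Cᵀ * (L - Lᵀ)).trace := by
  rw [Matrix.transpose_sub, Matrix.transpose_transpose, Matrix.sub_mul, Matrix.trace_sub,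
    Matrix.mul_sub, Matrix.trace_sub]
  congr 1
  rw [← Matrix.trace_transpose (C * L)]
  simp only [Matrix.transpose_mul]
  rw [Matrix.trace_mul_comm]

theorem qr_pullback (N : ℕ)
    (A Q R dA dQ dR Qb Rb : Matrix (Fin N) (Fin N) ℝ)
    (hA : A = Q * R) (hQ : Qᵀ * Q = 1)
    (hR : (PL N) ⊙ R = 0) (hRinv : IsUnit R.det)
    (hdA : dA = dQ * R + Q * dR)
    (hdQ : dQᵀ * Q + Qᵀ * dQ = 0)
    (hdR : (PL N) ⊙ dR = 0) :
    ((Q * (Rb + ((PL N) ⊙ (R * Rbᵀ - Rb * Rᵀ + Qᵀ * Qb - Qbᵀ * Q)) * R⁻¹ᵀ)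
        + (Qb - Q * Qᵀ * Qb) * R⁻¹ᵀ)ᵀ * dA).trace
      = (Qbᵀ * dQ).trace + (Rbᵀ * dR).trace := by
  haveI : Invertible R := R.invertibleOfIsUnitDet hRinv
  have hQQt : Q * Qᵀ = 1 := mul_eq_one_comm.mp hQ
  have hRR : R * R⁻¹ = 1 := Matrix.mul_nonsing_inv R hRinv
  set S : Matrix (Fin N) (Fin N) ℝ := Qᵀ * dQ with hS
  set X : Matrix (Fin N) (Fin N) ℝ := R * Rbᵀ - Rb * Rᵀ + Qᵀ * Qb - Qbᵀ * Q with hX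
  set L : Matrix (Fin N) (Fin N) ℝ := (PL N) ⊙ S with hL
  set Y : Matrix (Fin N) (Fin N) ℝ := (PL N) ⊙ X with hY
  -- antisymmetry of S
  have hSanti : Sᵀ = -S := by
    have h : dQᵀ * Q = -(Qᵀ * dQ) := by linear_combination (norm := noncomm_ring) hdQ
    rw [hS, Matrix.transpose_mul, Matrix.transpose_transpose, h]
  -- dQ = Q * S
  have hdQS : dQ = Q * S := by
    rw [hS, ← Matrix.mul_assoc, hQQt, one_mul]
  -- S = L - Lᵀ
  have hSLL : S = L - Lᵀ := by
    ext i j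
    have hij : S j i = -S i j := by
      have := congrFun (congrFun hSanti i) j
      simpa using this
    rcases lt_trichotomy i j with h | h | h
    · have h1 : ¬ j < i := not_lt.mpr h.le
      simp [hL, PL, Matrix.hadamard_apply, h, h1, hij]
    · subst h
      have h0 : S i i = 0 := by linarith [hij]
      simp [hL, PL, Matrix.hadamard_apply, h0]
    · have h1 : ¬ i < j := not_lt.mpr h.le
      simp [hL, PL, Matrix.hadamard_apply, h, h1]
  -- upper triangularity facts
  have hRut : R.BlockTriangular id := fun i j hij => PL_hadamard_eq_zero.mp hR i j hij
  have hdRut : dR.BlockTriangular id := fun i j hij => PL_hadamard_eq_zero.mp hdR i j hij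
  have hRinvut : R⁻¹.BlockTriangular id := blockTriangular_inv_of_blockTriangular hRut
  have hT : (PL N) ⊙ (dR * R⁻¹) = 0 :=
    PL_hadamard_eq_zero.mpr fun i j hij => (hdRut.mul hRinvut) hij
  -- kill the last term
  have hQb0 : Q * Qᵀ * Qb = Qb := by rw [hQQt, one_mul]
  rw [hQb0, sub_self, zero_mul, add_zero]
  -- Qᵀ * dA = S * R + dR
  have hQtdA : Qᵀ * dA = S * R + dR := by
    rw [hdA, Matrix.mul_add, ← Matrix.mul_assoc, ← Matrix.mul_assoc, hQ, one_mul, hS]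
  rw [Matrix.transpose_mul, Matrix.mul_assoc, hQtdA]
  -- expand
  have hexp : (Rb + Y * R⁻¹ᵀ)ᵀ * (S * R + dR)
      = Rbᵀ * (S * R) + Rbᵀ * dR + (R⁻¹ * Yᵀ) * (S * R) + (R⁻¹ * Yᵀ) * dR := by
    rw [Matrix.transpose_add, Matrix.transpose_mul, Matrix.transpose_transpose]
    noncomm_ring
  rw [hexp, Matrix.trace_add, Matrix.trace_add, Matrix.trace_add]
  -- term 3
  have h3 : ((R⁻¹ * Yᵀ) * (S * R)).trace = (Xᵀ * L).trace := by
    rw [Matrix.trace_mul_comm, show (S * R) * (R⁻¹ * Yᵀ) = S * (R * R⁻¹) * Yᵀ by noncomm_ring,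
      hRR, Matrix.mul_one, Matrix.trace_mul_comm]
    exact had_trace (PL N) X S
  -- term 4
  have h4 : ((R⁻¹ * Yᵀ) * dR).trace = 0 := by
    rw [Matrix.mul_assoc, Matrix.trace_mul_comm, Matrix.mul_assoc,
      had_trace (PL N) X (dR * R⁻¹), hT, Matrix.mul_zero, Matrix.trace_zero]
  rw [h3, h4, add_zero]
  -- final algebra
  have hXsplit : X = (R * Rbᵀ - Rb * Rᵀ) + ((Qᵀ * Qb) - (Qᵀ * Qb)ᵀ) := by
    rw [hX, Matrix.transpose_mul, Matrix.transpose_transpose]; noncomm_ring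
  have hA' := lemA Rb R L
  have hB' := lemB (Qᵀ * Qb) L
  have e1 : (Qbᵀ * dQ).trace = (Qbᵀ * (Q * (L - Lᵀ))).trace := by
    rw [hdQS, hSLL]
  have e2 : (Xᵀ * L).trace
      = ((R * Rbᵀ - Rb * Rᵀ)ᵀ * L).trace + ((Qᵀ * Qb)ᵀ * (L - Lᵀ)).trace := by
    rw [hXsplit, Matrix.transpose_add, Matrix.add_mul, Matrix.trace_add, hB']
  have e3 : (Rbᵀ * (S * R)).trace = ((Rbᵀ * (L - Lᵀ)) * R).trace := by
    rw [hSLL, Matrix.mul_assoc]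
  have e4 : (Qbᵀ * (Q * (L - Lᵀ))).trace = ((Qᵀ * Qb)ᵀ * (L - Lᵀ)).trace := by
    rw [Matrix.transpose_mul, Matrix.transpose_transpose, Matrix.mul_assoc]
  linarith [hA', e1, e2, e3, e4]
end

section
/- Let A ∈ ℝ^{N×N} with QR factorization A = QR (Q orthogonal, R upper triangular invertible), and suppose dA, dQ, dR satisfy the differentiated system dA = dQ R + Q dR, dQᵀQ + QᵀdQ = 0, P_L ∘ dR = 0. Then dQ and dR are uniquely determined by dA: explicitly X = P_L∘(QᵀdA R⁻¹) − (P_L∘(QᵀdA R⁻¹))ᵀ, dR = QᵀdA − XR, dQ = Q X. -/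
open Matrix
open scoped Matrix

lemma skew_decomp {N : ℕ} (X : Matrix (Fin N) (Fin N) ℝ) (h : Xᵀ + X = 0) :
    X = (PL N) ⊙ X - ((PL N) ⊙ X)ᵀ := by
  have h' : ∀ i j, X j i + X i j = 0 := fun i j => by
    have := Matrix.ext_iff.mpr h i j
    simpa [Matrix.transpose_apply, add_comm] using this
  ext i j
  rcases lt_trichotomy j i with hij | hij | hij
  · simp [Matrix.hadamard, PL, hij, not_lt.mpr hij.le, Matrix.transpose_apply]
  · subst hij
    have := h' j j
    simp [Matrix.hadamard, PL, Matrix.transpose_apply]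
    linarith
  · have := h' i j
    simp [Matrix.hadamard, PL, hij, not_lt.mpr hij.le, Matrix.transpose_apply]
    linarith

theorem qr_differential_unique (N : ℕ)
    (A Q R dA : Matrix (Fin N) (Fin N) ℝ)
    (hA : A = Q * R) (hQ : Qᵀ * Q = 1)
    (hR : (PL N) ⊙ R = 0) (hRinv : IsUnit R.det) :
    (∀ dQ dR : Matrix (Fin N) (Fin N) ℝ,
      dA = dQ * R + Q * dR → dQᵀ * Q + Qᵀ * dQ = 0 → (PL N) ⊙ dR = 0 →
        dR = Qᵀ * dA -
            ((PL N) ⊙ (Qᵀ * dA * R⁻¹) - ((PL N) ⊙ (Qᵀ * dA * R⁻¹))ᵀ) * R ∧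
        dQ = Q * ((PL N) ⊙ (Qᵀ * dA * R⁻¹) - ((PL N) ⊙ (Qᵀ * dA * R⁻¹))ᵀ)) ∧
    ∀ dQ₁ dR₁ dQ₂ dR₂ : Matrix (Fin N) (Fin N) ℝ,
      dA = dQ₁ * R + Q * dR₁ → dQ₁ᵀ * Q + Qᵀ * dQ₁ = 0 → (PL N) ⊙ dR₁ = 0 →
      dA = dQ₂ * R + Q * dR₂ → dQ₂ᵀ * Q + Qᵀ * dQ₂ = 0 → (PL N) ⊙ dR₂ = 0 →
        dQ₁ = dQ₂ ∧ dR₁ = dR₂ := by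
  have hQQT : Q * Qᵀ = 1 := mul_eq_one_comm.mp hQ
  have hRR : R * R⁻¹ = 1 := Matrix.mul_nonsing_inv R hRinv
  have hRtri : R.BlockTriangular id := (PL_hadamard_eq_zero_iff R).mp hR
  haveI : Invertible R := R.invertibleOfIsUnitDet hRinv
  have hRinvtri : R⁻¹.BlockTriangular id := blockTriangular_inv_of_blockTriangular hRtri
  have key : ∀ dQ dR : Matrix (Fin N) (Fin N) ℝ,
      dA = dQ * R + Q * dR → dQᵀ * Q + Qᵀ * dQ = 0 → (PL N) ⊙ dR = 0 →
        dR = Qᵀ * dA -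
            ((PL N) ⊙ (Qᵀ * dA * R⁻¹) - ((PL N) ⊙ (Qᵀ * dA * R⁻¹))ᵀ) * R ∧
        dQ = Q * ((PL N) ⊙ (Qᵀ * dA * R⁻¹) - ((PL N) ⊙ (Qᵀ * dA * R⁻¹))ᵀ) := by
    intro dQ dR h1 h2 h3
    set X : Matrix (Fin N) (Fin N) ℝ := Qᵀ * dQ with hXdef
    have hskew : Xᵀ + X = 0 := by
      rw [hXdef, Matrix.transpose_mul, Matrix.transpose_transpose]; exact h2
    have hQdA : Qᵀ * dA = X * R + dR := by
      rw [h1, Matrix.mul_add, ← Matrix.mul_assoc, ← Matrix.mul_assoc, hQ, Matrix.one_mul, hXdef]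
    have hprod : Qᵀ * dA * R⁻¹ = X + dR * R⁻¹ := by
      rw [hQdA, Matrix.add_mul, Matrix.mul_assoc, hRR, Matrix.mul_one]
    have hdRtri : (dR * R⁻¹).BlockTriangular id :=
      ((PL_hadamard_eq_zero_iff dR).mp h3).mul hRinvtri
    have hPL : (PL N) ⊙ (Qᵀ * dA * R⁻¹) = (PL N) ⊙ X := by
      rw [hprod, Matrix.hadamard_add, (PL_hadamard_eq_zero_iff _).mpr hdRtri, add_zero]
    have hX : X = (PL N) ⊙ (Qᵀ * dA * R⁻¹) - ((PL N) ⊙ (Qᵀ * dA * R⁻¹))ᵀ := by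
      rw [hPL]; exact skew_decomp X hskew
    constructor
    · rw [← hX]
      rw [hQdA]; abel
    · rw [← hX, hXdef, ← Matrix.mul_assoc, hQQT, Matrix.one_mul]
  refine ⟨key, ?_⟩
  intro dQ₁ dR₁ dQ₂ dR₂ h1 h2 h3 h4 h5 h6
  obtain ⟨e1, e2⟩ := key dQ₁ dR₁ h1 h2 h3
  obtain ⟨e3, e4⟩ := key dQ₂ dR₂ h4 h5 h6
  exact ⟨e2.trans e4.symm, e1.trans e3.symm⟩
end
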